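/- Let k be a perfect field of characteristic p, K = Frac(k[[t_1,...,t_n]]), and f ∈ k[[t]]. For every r ∈ {0,...,p-1}^n, the composition S_r ∘ res equals res ∘ S_{f,r,p-1} as maps from K((T)) to K, where S_r is the section operator on K associated with the monomial basis, and S_{f,r,p-1} is the section operator on K((T)) associated with the basis (t^r (f+T)^s). -/

import Mathlib

set_option synthInstance.maxHeartbeats 1000000
set_option maxHeartbeats 1000000

open scoped Classical

/-- The Frobenius on multivariate power series: `Σ a_i t^i ↦ Σ a_i^p t^{p·i}`. -/
noncomputable def frobMv {n : ℕ} {k : Type*} [CommSemiring k] (p : ℕ)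
    (g : MvPowerSeries (Fin n) k) : MvPowerSeries (Fin n) k :=
  fun i => if ∀ j, p ∣ i j then
    (MvPowerSeries.coeff (R := k) (Finsupp.mapRange (· / p) (Nat.zero_div p) i) g) ^ p else 0

section AuxLemmas

lemma aux_prod_monomial {n : ℕ} {k : Type*} [CommSemiring k] (s : Finset (Fin n))
    (d : Fin n → (Fin n →₀ ℕ)) :
    (∏ i ∈ s, MvPowerSeries.monomial (R := k) (d i) (1 : k))
      = MvPowerSeries.monomial (R := k) (∑ i ∈ s, d i) 1 := by
  induction s using Finset.induction with
  | empty => simp [MvPowerSeries.monomial_zero_one]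
  | insert a s h ih =>
      rw [Finset.prod_insert h, ih, Finset.sum_insert h,
        MvPowerSeries.monomial_mul_monomial, one_mul]

lemma aux_prod_X_pow {n : ℕ} {k : Type*} [CommSemiring k] (r : Fin n → ℕ) :
    (∏ i : Fin n, (MvPowerSeries.X i : MvPowerSeries (Fin n) k) ^ r i)
      = MvPowerSeries.monomial (R := k) (∑ i, Finsupp.single i (r i)) 1 := by
  simp only [MvPowerSeries.X_pow_eq]
  exact aux_prod_monomial _ _

lemma aux_rf_apply {n : ℕ} (c : Fin n → ℕ) (j : Fin n) :
    (∑ i, Finsupp.single i (c i)) j = c j := by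
  rw [Finsupp.finset_sum_apply]
  simp [Finsupp.single_apply]

/-- Uniqueness of the coefficients in the monomial-basis expansion, at the level of
power series. -/
lemma aux_key_R (p n : ℕ) [Fact p.Prime] (k : Type*) [Field k]
    (g : (Fin n → Fin p) → MvPowerSeries (Fin n) k)
    (h : (∑ r : Fin n → Fin p,
        (∏ i : Fin n, (MvPowerSeries.X i : MvPowerSeries (Fin n) k) ^ ((r i : ℕ)))
          * frobMv p (g r)) = 0) :
    ∀ r, g r = 0 := by
  have hp : 0 < p := (Fact.out : p.Prime).pos
  intro r₀
  ext d
  rw [map_zero]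
  set rf : (Fin n → Fin p) → (Fin n →₀ ℕ) := fun r => ∑ i, Finsupp.single i (r i : ℕ) with hrf
  set m : Fin n →₀ ℕ := p • d + rf r₀ with hm
  have hmj : ∀ j, m j = p * d j + (r₀ j : ℕ) := by
    intro j
    simp [hm, hrf, Finsupp.finset_sum_apply, Finsupp.single_apply, mul_comm]
  have hcoeff := congrArg (MvPowerSeries.coeff (R := k) m) h
  rw [map_sum, map_zero] at hcoeff
  rw [Finset.sum_eq_single r₀] at hcoeff
  · rw [aux_prod_X_pow, MvPowerSeries.coeff_monomial_mul, if_pos, one_mul] at hcoeff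
    · have hsub : m - rf r₀ = p • d := by
        ext j
        rw [Finsupp.tsub_apply, hmj j]
        simp [hrf, Finsupp.finset_sum_apply, Finsupp.single_apply, mul_comm]
      rw [hsub] at hcoeff
      have hdiv : ∀ j, p ∣ (p • d) j := by
        intro j; simp [mul_comm]
      have hmap : Finsupp.mapRange (· / p) (Nat.zero_div p) (p • d) = d := by
        ext j
        simp [Finsupp.mapRange_apply, Nat.mul_div_cancel_left _ hp]
      have hfr : MvPowerSeries.coeff (R := k) (p • d) (frobMv p (g r₀))
          = (MvPowerSeries.coeff (R := k) d (g r₀)) ^ p := by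
        rw [MvPowerSeries.coeff_apply, frobMv, if_pos hdiv, hmap]
      rw [hfr] at hcoeff
      exact pow_eq_zero_iff hp.ne' |>.mp hcoeff
    · rw [Finsupp.le_def]
      intro j
      rw [hmj j]
      simp [hrf, Finsupp.finset_sum_apply, Finsupp.single_apply]
  · intro r _ hr
    rw [aux_prod_X_pow, MvPowerSeries.coeff_monomial_mul]
    split_ifs with hle
    · rw [one_mul, MvPowerSeries.coeff_apply, frobMv, if_neg]
      intro hall
      obtain ⟨j, hj⟩ := Function.ne_iff.mp hr
      have hlej : ((∑ i, Finsupp.single i ((r i : ℕ))) : Fin n →₀ ℕ) j ≤ m j :=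
        Finsupp.le_def.mp hle j
      rw [aux_rf_apply] at hlej
      have hsubj : (m - ∑ i, Finsupp.single i ((r i : ℕ))) j = m j - (r j : ℕ) := by
        rw [Finsupp.tsub_apply, aux_rf_apply]
      have hd := hall j
      rw [hsubj] at hd
      obtain ⟨c, hc⟩ := hd
      have h1 : (m j - (r j : ℕ)) + (r j : ℕ) = p * d j + (r₀ j : ℕ) := by
        rw [Nat.sub_add_cancel hlej, hmj j]
      rw [hc] at h1
      have h3 : (r j : ℕ) = (r₀ j : ℕ) := by
        have h4 := congrArg (· % p) h1
        simpa [Nat.mul_add_mod, Nat.mod_eq_of_lt (r j).isLt,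
          Nat.mod_eq_of_lt (r₀ j).isLt] using h4
      exact hj (Fin.ext h3)
    · rfl
  · intro hmem; exact absurd (Finset.mem_univ r₀) hmem

/-- Uniqueness of the coefficients in the monomial-basis expansion, in the fraction field. -/
lemma aux_key_K (p n : ℕ) [Fact p.Prime] (k : Type*) [Field k]
    (F : FractionRing (MvPowerSeries (Fin n) k) →+* FractionRing (MvPowerSeries (Fin n) k))
    (hF : ∀ g : MvPowerSeries (Fin n) k,
      F (algebraMap (MvPowerSeries (Fin n) k) (FractionRing (MvPowerSeries (Fin n) k)) g)
        = algebraMap (MvPowerSeries (Fin n) k) (FractionRing (MvPowerSeries (Fin n) k))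
            (frobMv p g))
    (a : (Fin n → Fin p) → FractionRing (MvPowerSeries (Fin n) k))
    (h : (∑ r : Fin n → Fin p,
        (∏ i : Fin n,
          (algebraMap (MvPowerSeries (Fin n) k) (FractionRing (MvPowerSeries (Fin n) k))
            (MvPowerSeries.X i)) ^ ((r i : ℕ))) * F (a r)) = 0) :
    ∀ r, a r = 0 := by
  obtain ⟨b, hb⟩ := IsLocalization.exist_integer_multiples_of_finite
    (nonZeroDivisors (MvPowerSeries (Fin n) k)) a
  have hb' : ∀ i, ∃ x : MvPowerSeries (Fin n) k,
      algebraMap (MvPowerSeries (Fin n) k) (FractionRing (MvPowerSeries (Fin n) k)) x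
        = (b : MvPowerSeries (Fin n) k) • a i := fun i => hb i
  choose g hg using hb'
  have hmain : (∑ r : Fin n → Fin p,
      (∏ i : Fin n,
        (algebraMap (MvPowerSeries (Fin n) k) (FractionRing (MvPowerSeries (Fin n) k))
          (MvPowerSeries.X i)) ^ ((r i : ℕ)))
        * algebraMap (MvPowerSeries (Fin n) k) (FractionRing (MvPowerSeries (Fin n) k))
            (frobMv p (g r))) = 0 := by
    have heach : ∀ r, algebraMap (MvPowerSeries (Fin n) k)
          (FractionRing (MvPowerSeries (Fin n) k)) (frobMv p (g r))
        = F (algebraMap (MvPowerSeries (Fin n) k) (FractionRing (MvPowerSeries (Fin n) k))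
            (b : MvPowerSeries (Fin n) k)) * F (a r) := by
      intro r
      rw [← hF, hg, Algebra.smul_def, map_mul]
    simp only [heach]
    have hfac : (∑ r : Fin n → Fin p,
        (∏ i : Fin n,
          (algebraMap (MvPowerSeries (Fin n) k) (FractionRing (MvPowerSeries (Fin n) k))
            (MvPowerSeries.X i)) ^ ((r i : ℕ)))
          * (F (algebraMap (MvPowerSeries (Fin n) k) (FractionRing (MvPowerSeries (Fin n) k))
              (b : MvPowerSeries (Fin n) k)) * F (a r)))
        = F (algebraMap (MvPowerSeries (Fin n) k) (FractionRing (MvPowerSeries (Fin n) k))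
            (b : MvPowerSeries (Fin n) k)) * ∑ r : Fin n → Fin p,
        (∏ i : Fin n,
          (algebraMap (MvPowerSeries (Fin n) k) (FractionRing (MvPowerSeries (Fin n) k))
            (MvPowerSeries.X i)) ^ ((r i : ℕ))) * F (a r) := by
      rw [Finset.mul_sum]
      exact Finset.sum_congr rfl fun r _ => by ring
    rw [hfac, h, mul_zero]
  have h2 : algebraMap (MvPowerSeries (Fin n) k) (FractionRing (MvPowerSeries (Fin n) k))
      (∑ r : Fin n → Fin p,
      (∏ i : Fin n, (MvPowerSeries.X i : MvPowerSeries (Fin n) k) ^ ((r i : ℕ)))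
        * frobMv p (g r)) = 0 := by
    rw [map_sum]
    rw [← hmain]
    refine Finset.sum_congr rfl fun r _ => ?_
    rw [map_mul, map_prod]
    simp only [map_pow]
  have hinj : Function.Injective (algebraMap (MvPowerSeries (Fin n) k)
      (FractionRing (MvPowerSeries (Fin n) k))) :=
    IsLocalization.injective (FractionRing (MvPowerSeries (Fin n) k))
      (le_refl (nonZeroDivisors (MvPowerSeries (Fin n) k)))
  have h3 : (∑ r : Fin n → Fin p,
      (∏ i : Fin n, (MvPowerSeries.X i : MvPowerSeries (Fin n) k) ^ ((r i : ℕ)))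
        * frobMv p (g r)) = 0 := by
    apply hinj
    rw [h2, map_zero]
  have h4 := aux_key_R p n k g h3
  intro r
  have h5 : algebraMap (MvPowerSeries (Fin n) k) (FractionRing (MvPowerSeries (Fin n) k))
      (b : MvPowerSeries (Fin n) k) * a r = 0 := by
    rw [← Algebra.smul_def, ← hg, h4, map_zero]
  have h6 : IsUnit (algebraMap (MvPowerSeries (Fin n) k)
      (FractionRing (MvPowerSeries (Fin n) k)) (b : MvPowerSeries (Fin n) k)) :=
    IsLocalization.map_units (FractionRing (MvPowerSeries (Fin n) k)) b
  exact (h6.mul_right_eq_zero).mp h5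

lemma aux_sum_coeff {K : Type*} [CommRing K] {ι : Type*} (s : Finset ι)
    (f : ι → LaurentSeries K) (g : ℤ) :
    (∑ j ∈ s, f j).coeff g = ∑ j ∈ s, (f j).coeff g :=
  map_sum (HahnSeries.coeff.addMonoidHom g) f s

/-- Residue of `(C b + T)^{s'} · F₂ y`: only `s' = p-1` contributes, giving `F(res y)`. -/
lemma aux_coeff (p : ℕ) (hp : 1 < p) {K : Type*} [CommRing K]
    (F : K →+* K) (F₂ : LaurentSeries K →+* LaurentSeries K)
    (hF₂ : ∀ (x : LaurentSeries K) (m : ℤ),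
      (F₂ x).coeff m = if (p:ℤ) ∣ m then F (x.coeff (m / p)) else 0)
    (b : K) (s' : ℕ) (hs' : s' < p) (y : LaurentSeries K) :
    ((HahnSeries.C b + HahnSeries.single (1:ℤ) 1) ^ s' * F₂ y).coeff (-1) =
      if s' = p - 1 then F (y.coeff (-1)) else 0 := by
  rw [add_pow, Finset.sum_mul, aux_sum_coeff]
  have hterm : ∀ j m : ℕ,
      (HahnSeries.C b ^ j * HahnSeries.single (1:ℤ) 1 ^ m * (s'.choose j : HahnSeries ℤ K)
        * F₂ y).coeff (-1)
      = (b ^ j * (s'.choose j : K))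
          * (if (p:ℤ) ∣ (-1 - (m:ℤ)) then F (y.coeff ((-1 - (m:ℤ)) / p)) else 0) := by
    intro j m
    have h1 : HahnSeries.C b ^ j * HahnSeries.single (1:ℤ) 1 ^ m
          * (s'.choose j : HahnSeries ℤ K) * F₂ y
        = HahnSeries.C (b ^ j * (s'.choose j : K))
            * (HahnSeries.single (m : ℤ) 1 * F₂ y) := by
      rw [← map_pow, ← map_natCast (HahnSeries.C (R := K) (Γ := ℤ)) (s'.choose j), map_mul,
        HahnSeries.single_pow]
      simp only [nsmul_eq_mul, mul_one, one_pow]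
      ring
    have h3 : (HahnSeries.single (m:ℤ) 1 * F₂ y).coeff (-1) = (F₂ y).coeff (-1 - m) := by
      have h4 := HahnSeries.coeff_single_mul_add (r := (1:K)) (x := F₂ y)
        (a := -1 - (m:ℤ)) (b := (m:ℤ))
      rw [one_mul, show (-1 - (m:ℤ)) + m = -1 by ring] at h4
      exact h4
    rw [h1, HahnSeries.C_apply, HahnSeries.single_zero_mul_eq_smul, HahnSeries.coeff_smul,
      h3, hF₂, smul_eq_mul]
  have hnd : ∀ m : ℕ, m ≤ p - 2 → ¬ ((p:ℤ) ∣ (-1 - (m:ℤ))) := by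
    intro m hm hdvd
    have h5 : (p:ℤ) ∣ ((m:ℤ) + 1) := by
      have h6 := (dvd_neg (α := ℤ)).mpr hdvd
      rw [show -(-1 - (m:ℤ)) = (m:ℤ) + 1 by ring] at h6
      exact h6
    have h7 := Int.le_of_dvd (by positivity) h5
    omega
  by_cases hcase : s' = p - 1
  · subst hcase
    rw [if_pos rfl]
    rw [Finset.sum_eq_single_of_mem 0 (Finset.mem_range.mpr (by omega))]
    · rw [hterm 0 (p - 1 - 0)]
      have h8 : (-1 - ((p - 1 - 0 : ℕ) : ℤ)) = -(p:ℤ) := by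
        have : ((p - 1 - 0 : ℕ) : ℤ) = (p:ℤ) - 1 := by push_cast [Nat.sub_zero]; omega
        rw [this]; ring
      rw [h8, if_pos (dvd_neg.mpr dvd_rfl)]
      have h9 : (-(p:ℤ)) / p = -1 := by
        rw [show (-(p:ℤ)) = (p:ℤ) * (-1) by ring,
          Int.mul_ediv_cancel_left _ (by exact_mod_cast (by omega : p ≠ 0))]
      rw [h9]
      simp
    · intro j hj hj0
      rw [hterm j (p - 1 - j)]
      rw [if_neg (hnd _ (by omega)), mul_zero]
  · rw [if_neg hcase]
    apply Finset.sum_eq_zero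
    intro j hj
    rw [hterm j (s' - j)]
    rw [if_neg (hnd _ (by omega)), mul_zero]

end AuxLemmas

/-- commutation `S_r ∘ res = res ∘ S_{f,r,p-1}` between the residue map and the
section operators on `K` (monomial basis) and on `K((T))` (basis `t^r (f+T)^s`). -/
theorem stmt5 (p n : ℕ) [Fact p.Prime] (k : Type*) [Field k] [CharP k p] [PerfectRing k p]
    -- the Frobenius F on K = Frac(k[[t]])
    (F : FractionRing (MvPowerSeries (Fin n) k) →+* FractionRing (MvPowerSeries (Fin n) k))
    (hF : ∀ g : MvPowerSeries (Fin n) k,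
      F (algebraMap (MvPowerSeries (Fin n) k) (FractionRing (MvPowerSeries (Fin n) k)) g)
        = algebraMap (MvPowerSeries (Fin n) k) (FractionRing (MvPowerSeries (Fin n) k))
            (frobMv p g))
    -- the section operators S_r on K, defined by the expansion over the monomial basis
    (S : (Fin n → Fin p) → FractionRing (MvPowerSeries (Fin n) k) →
          FractionRing (MvPowerSeries (Fin n) k))
    (hS : ∀ g : FractionRing (MvPowerSeries (Fin n) k),
      g = ∑ r : Fin n → Fin p,
        (∏ i : Fin n,
          (algebraMap (MvPowerSeries (Fin n) k) (FractionRing (MvPowerSeries (Fin n) k))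
            (MvPowerSeries.X i)) ^ ((r i : ℕ))) * F (S r g))
    -- the Frobenius F₂ on K((T)), extending F with F₂(T) = T^p
    (F₂ : LaurentSeries (FractionRing (MvPowerSeries (Fin n) k)) →+*
          LaurentSeries (FractionRing (MvPowerSeries (Fin n) k)))
    (hF₂ : ∀ (x : LaurentSeries (FractionRing (MvPowerSeries (Fin n) k))) (m : ℤ),
      (F₂ x).coeff m = if (p : ℤ) ∣ m then F (x.coeff (m / p)) else 0)
    (f : MvPowerSeries (Fin n) k)
    -- the section operators S_{f,r,s} on K((T)), defined by the expansion over the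
    -- basis t^r (f+T)^s
    (S₂ : (Fin n → Fin p) × Fin p → LaurentSeries (FractionRing (MvPowerSeries (Fin n) k)) →
          LaurentSeries (FractionRing (MvPowerSeries (Fin n) k)))
    (hS₂ : ∀ x : LaurentSeries (FractionRing (MvPowerSeries (Fin n) k)),
      x = ∑ rs : (Fin n → Fin p) × Fin p,
        HahnSeries.C (∏ i : Fin n,
            (algebraMap (MvPowerSeries (Fin n) k) (FractionRing (MvPowerSeries (Fin n) k))
              (MvPowerSeries.X i)) ^ ((rs.1 i : ℕ)))
          * (HahnSeries.C (algebraMap (MvPowerSeries (Fin n) k)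
                (FractionRing (MvPowerSeries (Fin n) k)) f)
             + HahnSeries.single (1 : ℤ) 1) ^ ((rs.2 : ℕ))
          * F₂ (S₂ rs x)) :
    -- conclusion: S_r ∘ res = res ∘ S_{f,r,p-1}
    ∀ (r : Fin n → Fin p) (s : Fin p), (s : ℕ) = p - 1 →
      ∀ x : LaurentSeries (FractionRing (MvPowerSeries (Fin n) k)),
        S r (x.coeff (-1 : ℤ)) = (S₂ (r, s) x).coeff (-1 : ℤ) := by
  have hp1 : 1 < p := (Fact.out : p.Prime).one_lt
  intro r s hs x
  -- Step 1: compute the residue of x from the expansion hS₂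
  have hx : x.coeff (-1 : ℤ)
      = ∑ r' : Fin n → Fin p,
        (∏ i : Fin n,
          (algebraMap (MvPowerSeries (Fin n) k) (FractionRing (MvPowerSeries (Fin n) k))
            (MvPowerSeries.X i)) ^ ((r' i : ℕ)))
          * F ((S₂ (r', s) x).coeff (-1 : ℤ)) := by
    have h0 := congrArg
      (fun z : LaurentSeries (FractionRing (MvPowerSeries (Fin n) k)) => z.coeff (-1 : ℤ))
      (hS₂ x)
    rw [aux_sum_coeff] at h0
    have hterm : ∀ rs : (Fin n → Fin p) × Fin p,
        (HahnSeries.C (∏ i : Fin n,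
            (algebraMap (MvPowerSeries (Fin n) k) (FractionRing (MvPowerSeries (Fin n) k))
              (MvPowerSeries.X i)) ^ ((rs.1 i : ℕ)))
          * (HahnSeries.C (algebraMap (MvPowerSeries (Fin n) k)
                (FractionRing (MvPowerSeries (Fin n) k)) f)
             + HahnSeries.single (1 : ℤ) 1) ^ ((rs.2 : ℕ))
          * F₂ (S₂ rs x)).coeff (-1 : ℤ)
        = (∏ i : Fin n,
            (algebraMap (MvPowerSeries (Fin n) k) (FractionRing (MvPowerSeries (Fin n) k))
              (MvPowerSeries.X i)) ^ ((rs.1 i : ℕ)))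
          * (if ((rs.2 : ℕ)) = p - 1
            then F ((S₂ rs x).coeff (-1 : ℤ)) else 0) := by
      intro rs
      rw [mul_assoc, HahnSeries.C_apply, HahnSeries.single_zero_mul_eq_smul,
        HahnSeries.coeff_smul, smul_eq_mul,
        aux_coeff p hp1 F F₂ hF₂ _ _ rs.2.isLt]
    rw [Finset.sum_congr rfl (fun rs _ => hterm rs)] at h0
    rw [h0, Fintype.sum_prod_type]
    refine Finset.sum_congr rfl fun r' _ => ?_
    have hcond : ∀ s' : Fin p, ((s' : ℕ) = p - 1) ↔ s' = s := by
      intro s'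
      rw [← hs, Fin.val_eq_val]
    simp only [hcond, mul_ite, mul_zero]
    rw [Finset.sum_ite_eq' Finset.univ s
      (fun s' => (∏ i : Fin n,
          (algebraMap (MvPowerSeries (Fin n) k) (FractionRing (MvPowerSeries (Fin n) k))
            (MvPowerSeries.X i)) ^ ((r' i : ℕ))) * F ((S₂ (r', s') x).coeff (-1 : ℤ))),
      if_pos (Finset.mem_univ s)]
  -- Step 2: compare with the expansion hS of the residue and use uniqueness
  have hzero : (∑ r' : Fin n → Fin p,
      (∏ i : Fin n,
        (algebraMap (MvPowerSeries (Fin n) k) (FractionRing (MvPowerSeries (Fin n) k))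
          (MvPowerSeries.X i)) ^ ((r' i : ℕ)))
        * F (S r' (x.coeff (-1 : ℤ)) - (S₂ (r', s) x).coeff (-1 : ℤ))) = 0 := by
    simp only [map_sub, mul_sub]
    rw [Finset.sum_sub_distrib, ← hS (x.coeff (-1 : ℤ)), ← hx, sub_self]
  have hkey := aux_key_K p n k F hF
    (fun r' => S r' (x.coeff (-1 : ℤ)) - (S₂ (r', s) x).coeff (-1 : ℤ)) hzero r
  exact sub_eq_zero.mp hkey
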